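/- Fix integers v ≥ 1 and block sizes p₀, p₁, …, p_v ≥ 1 with p = p₀ + p₁ + ⋯ + p_v, partitioning the coordinates of ℝ^p into consecutive blocks of sizes p₁, …, p_v, p₀ (the last block, indexed 0, is the noise block). Fix a finite nonempty set 𝒯 of lags and real numbers λ_{τj} for τ ∈ 𝒯, j = 0, 1, …, v, with λ_{τ0} = 0 for all τ ∈ 𝒯, and let D_τ = diag(λ_{τ1}I_{p₁}, …, λ_{τv}I_{p_v}, λ_{τ0}I_{p₀}) ∈ ℝ^{p×p}. Let (Û_T)_{T∈ℕ} be random orthogonal p×p matrices whose off-diagonal blocks relative to the partition satisfy √T·Û_{ij,T} = O_p(1) for i ≠ j, and for each τ ∈ 𝒯 let (Ĥ_{τ,T})_{T∈ℕ} be random symmetric p×p matrices with √T(Ĥ_{τ,T} − D_τ) = O_p(1). Then for every τ ∈ 𝒯 and every group index i ∈ {0, 1, …, v}, the i-th diagonal block of Û_TᵀĤ_{τ,T}Û_T satisfies (Û_TᵀĤ_{τ,T}Û_T)_{ii} = λ_{τi}I_{p_i} + Û_{ii,T}ᵀ(Ĥ_{τ,ii,T} − λ_{τi}I_{p_i})Û_{ii,T}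 + O_p(1/T), where Ĥ_{τ,ii,T} is the i-th diagonal block of Ĥ_{τ,T}; in particular, diag(Û_TᵀĤ_{τ,T}Û_T) converges in probability to D_τ. -/

import Mathlib

open MeasureTheory Filter Matrix Finset
open scoped Topology ENNReal NNReal Kronecker

noncomputable section

/-- Squared Frobenius norm of a real matrix. -/
def frobSq {ι κ : Type*} [Fintype ι] [Fintype κ] (M : Matrix ι κ ℝ) : ℝ :=
  ∑ i, ∑ j, (M i j) ^ 2

/-- Frobenius norm of a real matrix. -/
def frobNorm {ι κ : Type*} [Fintype ι] [Fintype κ] (M : Matrix ι κ ℝ) : ℝ :=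
  Real.sqrt (frobSq M)

/-- Euclidean norm of a vector. -/
def euclNorm {ι : Type*} [Fintype ι] (x : ι → ℝ) : ℝ :=
  Real.sqrt (∑ i, (x i) ^ 2)

/-- `X_T = O_p(1)` (boundedness in probability), matrix version, Frobenius norm. -/
def MatIsOp {Ω ι κ : Type*} [MeasurableSpace Ω] [Fintype ι] [Fintype κ]
    (μ : Measure Ω) (X : ℕ → Ω → Matrix ι κ ℝ) : Prop :=
  ∀ ε : ℝ, 0 < ε → ∃ M : ℝ, 0 < M ∧ ∀ T, μ {ω | M < frobNorm (X T ω)} ≤ ENNReal.ofReal ε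

/-- `X_T = O_p(1)` (boundedness in probability), vector version, Euclidean norm. -/
def VecIsOp {Ω ι : Type*} [MeasurableSpace Ω] [Fintype ι]
    (μ : Measure Ω) (X : ℕ → Ω → ι → ℝ) : Prop :=
  ∀ ε : ℝ, 0 < ε → ∃ M : ℝ, 0 < M ∧ ∀ T, μ {ω | M < euclNorm (X T ω)} ≤ ENNReal.ofReal ε

/-- Convergence to zero in probability, matrix version (Frobenius norm). -/
def MatTendstoP0 {Ω ι κ : Type*} [MeasurableSpace Ω] [Fintype ι] [Fintype κ]
    (μ : Measure Ω) (X : ℕ → Ω → Matrix ι κ ℝ) : Prop :=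
  ∀ ε : ℝ, 0 < ε → Tendsto (fun T => μ {ω | ε < frobNorm (X T ω)}) atTop (𝓝 0)

/-- Convergence to zero in probability, real-valued version. -/
def RealTendstoP0 {Ω : Type*} [MeasurableSpace Ω]
    (μ : Measure Ω) (X : ℕ → Ω → ℝ) : Prop :=
  ∀ ε : ℝ, 0 < ε → Tendsto (fun T => μ {ω | ε < |X T ω|}) atTop (𝓝 0)

/-- Convergence in distribution: weak convergence of the laws to the measure `ν`. -/
def TendstoInDist {Ω E : Type*} [MeasurableSpace Ω] [MeasurableSpace E] [TopologicalSpace E]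
    (μ : Measure Ω) (X : ℕ → Ω → E) (ν : Measure E) : Prop :=
  ∀ f : BoundedContinuousFunction E ℝ,
    Tendsto (fun T => ∫ ω, f (X T ω) ∂μ) atTop (𝓝 (∫ x, f x ∂ν))

/-- The square root of a positive semidefinite matrix, as `Matrix.PosSemidef.sqrt` was defined
in the older Mathlib (removed since). -/
def psdSqrt {ι : Type*} [Fintype ι] [DecidableEq ι] {V : Matrix ι ι ℝ} (hV : V.PosSemidef) :
    Matrix ι ι ℝ :=
  hV.1.eigenvectorUnitary.1 * diagonal ((↑) ∘ (Real.sqrt ∘ hV.1.eigenvalues))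
    * (star hV.1.eigenvectorUnitary : Matrix ι ι ℝ)

open Classical in
/-- The centered (possibly degenerate) Gaussian distribution `N(0, V)` on `ι → ℝ`,
realized as the law of `V^{1/2} z` with `z` standard Gaussian. -/
def gaussianOfCov {ι : Type*} [Fintype ι] [DecidableEq ι] (V : Matrix ι ι ℝ) :
    Measure (ι → ℝ) :=
  if h : V.PosSemidef then
    Measure.map (fun z => (psdSqrt h).mulVec z)
      (Measure.pi fun _ : ι => ProbabilityTheory.gaussianReal 0 1)
  else 0

/-- Chi-squared distribution with `k` degrees of freedom: Gamma, shape `k/2`, rate `1/2`. -/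
def chiSq (k : ℝ) : Measure ℝ := ProbabilityTheory.gammaMeasure (k / 2) (1 / 2)

open Classical in
/-- Inverse of the unique symmetric positive definite square root of `S`
(junk value `0` if `S` is not positive definite). -/
def invSqrt {ι : Type*} [Fintype ι] [DecidableEq ι] (S : Matrix ι ι ℝ) : Matrix ι ι ℝ :=
  if h : S.PosDef then (psdSqrt h.posSemidef)⁻¹ else 0

/-- Column-vectorization of an `r × r` matrix, indexed by (column, row) pairs. -/
def vecM {r : ℕ} (M : Matrix (Fin r) (Fin r) ℝ) : Fin r × Fin r → ℝ :=
  fun q => M q.2 q.1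

/-- The commutation matrix `K_rr = ∑ i j, E_r^{ij} ⊗ E_r^{ji}`. -/
def commMatrix (r : ℕ) : Matrix (Fin r × Fin r) (Fin r × Fin r) ℝ :=
  ∑ i : Fin r, ∑ j : Fin r, single i j (1 : ℝ) ⊗ₖ single j i (1 : ℝ)

/-- The matrix `D_rr = ∑ i, E_r^{ii} ⊗ E_r^{ii}`. -/
def dblDiagMatrix (r : ℕ) : Matrix (Fin r × Fin r) (Fin r × Fin r) ℝ :=
  ∑ i : Fin r, single i i (1 : ℝ) ⊗ₖ single i i (1 : ℝ)

/-- The all-ones matrix `J_r`. -/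
def onesMat (r : ℕ) : Matrix (Fin r) (Fin r) ℝ := Matrix.of fun _ _ => 1


/-- Index set for `ℝ^p` partitioned into blocks of sizes `s 0, …, s v`
(the block `Fin.last v` is the noise block, placed last). -/
abbrev BlkIdx (v : ℕ) (s : Fin (v + 1) → ℕ) : Type := (j : Fin (v + 1)) × Fin (s j)

/-- The `(i, j)` block of a matrix, relative to the block partition. -/
def blk {v : ℕ} {s : Fin (v + 1) → ℕ} (U : Matrix (BlkIdx v s) (BlkIdx v s) ℝ)
    (i j : Fin (v + 1)) : Matrix (Fin (s i)) (Fin (s j)) ℝ :=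
  Matrix.of fun a b => U ⟨i, a⟩ ⟨j, b⟩

/-- The diagonal matrix `D_τ = diag(λ_{τ1} I_{p₁}, …, λ_{τv} I_{p_v}, λ_{τ0} I_{p₀})`. -/
def Dmat {v : ℕ} (s : Fin (v + 1) → ℕ) {ι : Type*} (lam : ι → Fin (v + 1) → ℝ) (τ : ι) :
    Matrix (BlkIdx v s) (BlkIdx v s) ℝ :=
  Matrix.diagonal fun i => lam τ i.1

/-- The diagonal matrix obtained from `A` by zeroing out its off-diagonal entries. -/
def diagPart {n : Type*} [Fintype n] [DecidableEq n] (A : Matrix n n ℝ) : Matrix n n ℝ :=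
  Matrix.diagonal fun i => A i i

/- ======================= auxiliary lemmas ======================= -/

section FrobLemmas
variable {ι κ ν : Type*} [Fintype ι] [Fintype κ] [Fintype ν]

lemma frobSq_nonneg (M : Matrix ι κ ℝ) : 0 ≤ frobSq M := by
  apply Finset.sum_nonneg; intros; apply Finset.sum_nonneg; intros; positivity

lemma frobNorm_nonneg (M : Matrix ι κ ℝ) : 0 ≤ frobNorm M := Real.sqrt_nonneg _

lemma frobNorm_sq (M : Matrix ι κ ℝ) : frobNorm M ^ 2 = frobSq M :=
  Real.sq_sqrt (frobSq_nonneg M)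

lemma frobNorm_zero : frobNorm (0 : Matrix ι κ ℝ) = 0 := by
  simp [frobNorm, frobSq]

lemma frobNorm_le_of_sq_le {M : Matrix ι κ ℝ} {c : ℝ} (hc : 0 ≤ c) (h : frobSq M ≤ c ^ 2) :
    frobNorm M ≤ c := by
  rw [frobNorm]
  calc Real.sqrt (frobSq M) ≤ Real.sqrt (c ^ 2) := Real.sqrt_le_sqrt h
  _ = c := by rw [Real.sqrt_sq hc]

lemma frobNorm_smul (c : ℝ) (M : Matrix ι κ ℝ) : frobNorm (c • M) = |c| * frobNorm M := by
  have : frobSq (c • M) = c ^ 2 * frobSq M := by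
    simp only [frobSq, Matrix.smul_apply, smul_eq_mul, mul_pow, Finset.mul_sum]
  rw [frobNorm, this, Real.sqrt_mul (by positivity), Real.sqrt_sq_eq_abs]; rfl

lemma frobNorm_neg (M : Matrix ι κ ℝ) : frobNorm (-M) = frobNorm M := by
  have : (-M : Matrix ι κ ℝ) = (-1 : ℝ) • M := by simp
  rw [this, frobNorm_smul]; simp

lemma frobNorm_add_le (A B : Matrix ι κ ℝ) : frobNorm (A + B) ≤ frobNorm A + frobNorm B := by
  have h : frobSq (A + B) ≤ (frobNorm A + frobNorm B) ^ 2 := by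
    have hcs : ∑ i, ∑ j, A i j * B i j ≤ frobNorm A * frobNorm B := by
      have h1 : (∑ i, ∑ j, A i j * B i j) ^ 2 ≤ frobSq A * frobSq B := by
        classical
        have := Finset.sum_mul_sq_le_sq_mul_sq (Finset.univ ×ˢ Finset.univ)
          (fun p : ι × κ => A p.1 p.2) (fun p => B p.1 p.2)
        simpa [← Finset.sum_product', frobSq] using this
      calc ∑ i, ∑ j, A i j * B i j ≤ |∑ i, ∑ j, A i j * B i j| := le_abs_self _
      _ = Real.sqrt ((∑ i, ∑ j, A i j * B i j) ^ 2) := (Real.sqrt_sq_eq_abs _).symm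
      _ ≤ Real.sqrt (frobSq A * frobSq B) := Real.sqrt_le_sqrt h1
      _ = frobNorm A * frobNorm B := Real.sqrt_mul (frobSq_nonneg A) _
    have : frobSq (A + B) = frobSq A + 2 * (∑ i, ∑ j, A i j * B i j) + frobSq B := by
      simp only [frobSq, Matrix.add_apply, Finset.mul_sum]
      rw [← Finset.sum_add_distrib, ← Finset.sum_add_distrib]
      congr 1; funext i
      rw [← Finset.sum_add_distrib, ← Finset.sum_add_distrib]
      congr 1; funext j; ring
    rw [this]; nlinarith [frobNorm_sq A, frobNorm_sq B]
  exact frobNorm_le_of_sq_le (add_nonneg (frobNorm_nonneg A) (frobNorm_nonneg B)) h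

lemma frobNorm_transpose (M : Matrix ι κ ℝ) : frobNorm Mᵀ = frobNorm M := by
  rw [frobNorm, frobNorm]; congr 1
  rw [frobSq, frobSq, Finset.sum_comm]; rfl

lemma frobNorm_mul_le (A : Matrix ι κ ℝ) (B : Matrix κ ν ℝ) :
    frobNorm (A * B) ≤ frobNorm A * frobNorm B := by
  apply frobNorm_le_of_sq_le (mul_nonneg (frobNorm_nonneg A) (frobNorm_nonneg B))
  rw [mul_pow, frobNorm_sq, frobNorm_sq]
  have h1 : frobSq (A * B) ≤ ∑ i, ∑ j, (∑ k, (A i k) ^ 2) * (∑ k, (B k j) ^ 2) := by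
    apply Finset.sum_le_sum; intro i _
    apply Finset.sum_le_sum; intro j _
    simpa [Matrix.mul_apply] using
      Finset.sum_mul_sq_le_sq_mul_sq Finset.univ (fun k => A i k) (fun k => B k j)
  refine h1.trans (le_of_eq ?_)
  rw [show (∑ i, ∑ j, (∑ k, (A i k)^2) * (∑ k, (B k j)^2))
      = (∑ i, ∑ k, (A i k)^2) * (∑ j, ∑ k, (B k j)^2) from (Finset.sum_mul_sum _ _ _ _).symm]
  congr 1
  exact Finset.sum_comm

lemma frobNorm_sum_le {α : Type*} (s : Finset α) (f : α → Matrix ι κ ℝ) :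
    frobNorm (∑ a ∈ s, f a) ≤ ∑ a ∈ s, frobNorm (f a) := by
  classical
  induction s using Finset.induction with
  | empty => simp [frobNorm_zero]
  | insert _ _ h ih =>
      rw [Finset.sum_insert h, Finset.sum_insert h]
      exact (frobNorm_add_le _ _).trans (by linarith)

lemma frob_mul3_le {a b c d : Type*} [Fintype a] [Fintype b] [Fintype c] [Fintype d]
    (A : Matrix a b ℝ) (B : Matrix b c ℝ) (C : Matrix c d ℝ) :
    frobNorm (A * B * C) ≤ frobNorm A * frobNorm B * frobNorm C :=
  (frobNorm_mul_le _ _).trans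
    (mul_le_mul_of_nonneg_right (frobNorm_mul_le A B) (frobNorm_nonneg C))

lemma mul3_le {a b c a' b' c' : ℝ} (ha : a ≤ a') (hb : b ≤ b') (hc : c ≤ c')
    (ha0 : 0 ≤ a) (hb0 : 0 ≤ b) (hc0 : 0 ≤ c) (ha'0 : 0 ≤ a') (hb'0 : 0 ≤ b') :
    a * b * c ≤ a' * b' * c' :=
  mul_le_mul (mul_le_mul ha hb hb0 ha'0) hc hc0 (mul_nonneg ha'0 hb'0)

lemma frobNorm_orth {n : Type*} [Fintype n] [DecidableEq n] {U : Matrix n n ℝ}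
    (h : Uᵀ * U = 1) : frobNorm U = Real.sqrt (Fintype.card n) := by
  have : frobSq U = Fintype.card n := by
    have hcol : ∀ c : n, ∑ r, (U r c) ^ 2 = 1 := by
      intro c
      have h2 := congrFun (congrFun h c) c
      simp only [Matrix.mul_apply, Matrix.transpose_apply, Matrix.one_apply_eq] at h2
      rw [← h2]
      exact Finset.sum_congr rfl fun r _ => (sq (U r c)).symm ▸ rfl
    rw [frobSq, Finset.sum_comm]
    simp [hcol, Finset.card_univ]
  rw [frobNorm, this]

lemma sqrt_sum_le {α : Type*} (s : Finset α) (f : α → ℝ) (hf : ∀ a ∈ s, 0 ≤ f a) :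
    Real.sqrt (∑ a ∈ s, f a) ≤ ∑ a ∈ s, Real.sqrt (f a) := by
  classical
  induction s using Finset.induction with
  | empty => simp
  | @insert a s ha ih =>
      rw [Finset.sum_insert ha, Finset.sum_insert ha]
      have h1 : 0 ≤ f a := hf a (Finset.mem_insert_self a s)
      have h2 : 0 ≤ ∑ b ∈ s, f b :=
        Finset.sum_nonneg fun b hb => hf b (Finset.mem_insert_of_mem hb)
      have key : Real.sqrt (f a + ∑ b ∈ s, f b) ≤ Real.sqrt (f a) + Real.sqrt (∑ b ∈ s, f b) := by
        have hsq : f a + ∑ b ∈ s, f b ≤ (Real.sqrt (f a) + Real.sqrt (∑ b ∈ s, f b)) ^ 2 := by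
          nlinarith [Real.sq_sqrt h1, Real.sq_sqrt h2, Real.sqrt_nonneg (f a),
            Real.sqrt_nonneg (∑ b ∈ s, f b)]
        calc Real.sqrt (f a + ∑ b ∈ s, f b)
            ≤ Real.sqrt ((Real.sqrt (f a) + Real.sqrt (∑ b ∈ s, f b)) ^ 2) :=
              Real.sqrt_le_sqrt hsq
        _ = _ := Real.sqrt_sq (by positivity)
      exact key.trans (by
        have := ih fun b hb => hf b (Finset.mem_insert_of_mem hb)
        linarith)

end FrobLemmas
/- ======================= Op calculus ======================= -/

/-- scalar `O_p(1)` predicate -/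
def ROp {Ω : Type*} [MeasurableSpace Ω] (μ : Measure Ω) (f : ℕ → Ω → ℝ) : Prop :=
  ∀ ε : ℝ, 0 < ε → ∃ M : ℝ, 0 < M ∧ ∀ T, μ {ω | M < f T ω} ≤ ENNReal.ofReal ε

section ROpLemmas
variable {Ω : Type*} [MeasurableSpace Ω] {μ : Measure Ω} {f g : ℕ → Ω → ℝ}

lemma ROp.of_le (hf : ROp μ f) (h : ∀ T ω, g T ω ≤ f T ω) : ROp μ g := by
  intro ε hε
  obtain ⟨M, hM, hle⟩ := hf ε hε
  exact ⟨M, hM, fun T => le_trans (measure_mono fun ω hω => lt_of_lt_of_le hω (h T ω)) (hle T)⟩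

lemma ROp.of_bounded (c : ℝ) (h : ∀ T ω, g T ω ≤ c) : ROp μ g := by
  intro ε hε
  refine ⟨max c 1, lt_of_lt_of_le one_pos (le_max_right _ _), fun T => ?_⟩
  have hempty : {ω | max c 1 < g T ω} = ∅ := by
    ext ω; simp only [Set.mem_setOf_eq, Set.mem_empty_iff_false, iff_false, not_lt]
    exact (h T ω).trans (le_max_left _ _)
  rw [hempty]; simp

lemma ROp.add (hf : ROp μ f) (hg : ROp μ g) : ROp μ fun T ω => f T ω + g T ω := by
  intro ε hε
  obtain ⟨M₁, hM₁, h₁⟩ := hf (ε / 2) (by linarith)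
  obtain ⟨M₂, hM₂, h₂⟩ := hg (ε / 2) (by linarith)
  refine ⟨M₁ + M₂, by linarith, fun T => ?_⟩
  have hsub : {ω | M₁ + M₂ < f T ω + g T ω} ⊆ {ω | M₁ < f T ω} ∪ {ω | M₂ < g T ω} := by
    intro ω hω
    by_contra hcon
    simp only [Set.mem_union, Set.mem_setOf_eq, not_or, not_lt] at hcon
    exact absurd hω (by simp only [Set.mem_setOf_eq, not_lt]; linarith [hcon.1, hcon.2])
  calc μ _ ≤ μ ({ω | M₁ < f T ω} ∪ {ω | M₂ < g T ω}) := measure_mono hsub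
  _ ≤ μ {ω | M₁ < f T ω} + μ {ω | M₂ < g T ω} := measure_union_le _ _
  _ ≤ ENNReal.ofReal (ε / 2) + ENNReal.ofReal (ε / 2) := add_le_add (h₁ T) (h₂ T)
  _ = ENNReal.ofReal ε := by rw [← ENNReal.ofReal_add (by linarith) (by linarith)]; ring_nf

lemma ROp.mul (hf : ROp μ f) (hg : ROp μ g)
    (hg0 : ∀ T ω, 0 ≤ g T ω) :
    ROp μ fun T ω => f T ω * g T ω := by
  intro ε hε
  obtain ⟨M₁, hM₁, h₁⟩ := hf (ε / 2) (by linarith)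
  obtain ⟨M₂, hM₂, h₂⟩ := hg (ε / 2) (by linarith)
  refine ⟨M₁ * M₂, mul_pos hM₁ hM₂, fun T => ?_⟩
  have hsub : {ω | M₁ * M₂ < f T ω * g T ω} ⊆ {ω | M₁ < f T ω} ∪ {ω | M₂ < g T ω} := by
    intro ω hω
    by_contra hcon
    simp only [Set.mem_union, Set.mem_setOf_eq, not_or, not_lt] at hcon
    have hb : f T ω * g T ω ≤ M₁ * M₂ :=
      mul_le_mul hcon.1 hcon.2 (hg0 T ω) (le_of_lt hM₁)
    exact absurd hω (by simp only [Set.mem_setOf_eq, not_lt]; exact hb)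
  calc μ _ ≤ μ ({ω | M₁ < f T ω} ∪ {ω | M₂ < g T ω}) := measure_mono hsub
  _ ≤ μ {ω | M₁ < f T ω} + μ {ω | M₂ < g T ω} := measure_union_le _ _
  _ ≤ ENNReal.ofReal (ε / 2) + ENNReal.ofReal (ε / 2) := add_le_add (h₁ T) (h₂ T)
  _ = ENNReal.ofReal ε := by rw [← ENNReal.ofReal_add (by linarith) (by linarith)]; ring_nf

lemma ROp.sum {α : Type*} (s : Finset α) (F : α → ℕ → Ω → ℝ)
    (h : ∀ a ∈ s, ROp μ (F a)) : ROp μ fun T ω => ∑ a ∈ s, F a T ω := by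
  classical
  induction s using Finset.induction with
  | empty => exact ROp.of_bounded 0 (by simp)
  | @insert a s ha ih =>
      have key := (h a (Finset.mem_insert_self a s)).add
        (ih fun b hb => h b (Finset.mem_insert_of_mem hb))
      exact key.of_le fun T ω => by rw [Finset.sum_insert ha]

lemma ROp.const_mul (c : ℝ) (hf : ROp μ f) (hf0 : ∀ T ω, 0 ≤ f T ω) :
    ROp μ fun T ω => c * f T ω := by
  rcases le_or_gt c 0 with hc | hc
  · exact ROp.of_bounded 0 fun T ω => mul_nonpos_of_nonpos_of_nonneg hc (hf0 T ω)
  · exact (ROp.of_bounded (μ := μ) (g := fun _ _ => c) c fun _ _ => le_rfl).mul hf hf0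

lemma matIsOp_of_le {Ω n m : Type*} [MeasurableSpace Ω] [Fintype n] [Fintype m]
    {μ : Measure Ω} {X : ℕ → Ω → Matrix n m ℝ} {f : ℕ → Ω → ℝ} (hf : ROp μ f)
    (h : ∀ T ω, frobNorm (X T ω) ≤ f T ω) : MatIsOp μ X := by
  intro ε hε
  obtain ⟨M, hM, hle⟩ := hf ε hε
  exact ⟨M, hM, fun T => le_trans (measure_mono fun ω hω => lt_of_lt_of_le hω (h T ω)) (hle T)⟩

lemma rop_of_matIsOp {Ω n m : Type*} [MeasurableSpace Ω] [Fintype n] [Fintype m]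
    {μ : Measure Ω} {X : ℕ → Ω → Matrix n m ℝ} (h : MatIsOp μ X) :
    ROp μ fun T ω => frobNorm (X T ω) := h

lemma tendstoP0_of_sqrt_op {Ω n m : Type*} [MeasurableSpace Ω] [Fintype n] [Fintype m]
    {μ : Measure Ω} {X : ℕ → Ω → Matrix n m ℝ}
    (h : MatIsOp μ fun T ω => Real.sqrt T • X T ω) : MatTendstoP0 μ X := by
  intro ε hε
  rw [ENNReal.tendsto_atTop_zero]
  intro b hb
  rcases eq_or_ne b ⊤ with hbt | hbt
  · exact ⟨0, fun T _ => hbt ▸ le_top⟩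
  have hb0 : 0 < b.toReal := ENNReal.toReal_pos hb.ne' hbt
  have hδ0 : 0 < min b.toReal 1 := lt_min hb0 one_pos
  obtain ⟨M, hM, hle⟩ := h (min b.toReal 1) hδ0
  obtain ⟨N, hN⟩ : ∃ N : ℕ, M / ε < Real.sqrt N := by
    obtain ⟨N, hN⟩ := exists_nat_gt ((M / ε) ^ 2)
    exact ⟨N, by
      calc M / ε = Real.sqrt ((M / ε) ^ 2) := (Real.sqrt_sq (by positivity)).symm
      _ < Real.sqrt N := Real.sqrt_lt_sqrt (by positivity) hN⟩
  refine ⟨N, fun T hT => ?_⟩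
  have hsub : {ω | ε < frobNorm (X T ω)} ⊆ {ω | M < frobNorm (Real.sqrt T • X T ω)} := by
    intro ω hω
    simp only [Set.mem_setOf_eq] at hω ⊢
    rw [frobNorm_smul, abs_of_nonneg (Real.sqrt_nonneg _)]
    have h1 : M < Real.sqrt N * ε := by
      rw [div_lt_iff₀ hε] at hN; linarith
    have h2 : Real.sqrt N ≤ Real.sqrt T := Real.sqrt_le_sqrt (by exact_mod_cast hT)
    calc M < Real.sqrt N * ε := h1
    _ ≤ Real.sqrt T * frobNorm (X T ω) :=
        mul_le_mul h2 hω.le hε.le (Real.sqrt_nonneg _)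
  calc μ _ ≤ μ _ := measure_mono hsub
  _ ≤ ENNReal.ofReal (min b.toReal 1) := hle T
  _ ≤ ENNReal.ofReal b.toReal := ENNReal.ofReal_le_ofReal (min_le_left _ _)
  _ = b := ENNReal.ofReal_toReal hbt

end ROpLemmas
/- ======================= block lemmas ======================= -/

section BlockLemmas
variable {v : ℕ} {s : Fin (v + 1) → ℕ}

lemma sigma_sum {β : Type*} [AddCommMonoid β] (f : BlkIdx v s → β) :
    ∑ q : BlkIdx v s, f q = ∑ j, ∑ a, f ⟨j, a⟩ := by
  rw [← Finset.univ_sigma_univ, Finset.sum_sigma]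

lemma blk_mul (A B : Matrix (BlkIdx v s) (BlkIdx v s) ℝ) (i j : Fin (v + 1)) :
    blk (A * B) i j = ∑ k, blk A i k * blk B k j := by
  ext a b
  simp only [blk, Matrix.of_apply, Matrix.mul_apply, Finset.sum_apply, Matrix.sum_apply]
  rw [sigma_sum (f := fun q => A ⟨i, a⟩ q * B q ⟨j, b⟩)]

lemma blk_transpose (A : Matrix (BlkIdx v s) (BlkIdx v s) ℝ) (i j : Fin (v + 1)) :
    blk Aᵀ i j = (blk A j i)ᵀ := rfl

lemma blk_sub (A B : Matrix (BlkIdx v s) (BlkIdx v s) ℝ) (i j : Fin (v + 1)) :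
    blk (A - B) i j = blk A i j - blk B i j := rfl

lemma blk_smul (c : ℝ) (A : Matrix (BlkIdx v s) (BlkIdx v s) ℝ) (i j : Fin (v + 1)) :
    blk (c • A) i j = c • blk A i j := rfl

lemma blk_one_same (i : Fin (v + 1)) :
    blk (1 : Matrix (BlkIdx v s) (BlkIdx v s) ℝ) i i = 1 := by
  ext a b
  simp only [blk, Matrix.of_apply, Matrix.one_apply]
  by_cases h : a = b
  · subst h; simp
  · rw [if_neg (by simp [Sigma.mk.inj_iff, h]), if_neg h]

lemma blk_dmat_same {ι' : Type*} (lam : ι' → Fin (v + 1) → ℝ) (τ : ι') (i : Fin (v + 1)) :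
    blk (Dmat s lam τ) i i = lam τ i • (1 : Matrix (Fin (s i)) (Fin (s i)) ℝ) := by
  ext a b
  simp only [blk, Matrix.of_apply, Dmat, Matrix.diagonal_apply, Matrix.smul_apply,
    Matrix.one_apply, smul_eq_mul]
  by_cases h : a = b
  · subst h; simp
  · rw [if_neg (by simp [Sigma.mk.inj_iff, h])]; simp [h]

lemma blk_dmat_ne {ι' : Type*} (lam : ι' → Fin (v + 1) → ℝ) (τ : ι') {k l : Fin (v + 1)}
    (h : k ≠ l) : blk (Dmat s lam τ) k l = 0 := by
  ext a b
  simp only [blk, Matrix.of_apply, Dmat, Matrix.zero_apply]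
  exact Matrix.diagonal_apply_ne _ fun hq => h (congrArg Sigma.fst hq)

lemma frobSq_nonneg' {ι κ : Type*} [Fintype ι] [Fintype κ] (M : Matrix ι κ ℝ) : 0 ≤ frobSq M :=
  frobSq_nonneg M

lemma frobSq_blocks (A : Matrix (BlkIdx v s) (BlkIdx v s) ℝ) :
    frobSq A = ∑ i, ∑ j, frobSq (blk A i j) := by
  rw [frobSq, sigma_sum (f := fun q => ∑ r, A q r ^ 2)]
  refine Finset.sum_congr rfl fun i _ => ?_
  have h : ∀ a : Fin (s i), ∑ r : BlkIdx v s, A ⟨i, a⟩ r ^ 2 = ∑ j, ∑ b, A ⟨i, a⟩ ⟨j, b⟩ ^ 2 :=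
    fun a => sigma_sum _
  rw [Finset.sum_congr rfl fun a _ => h a, Finset.sum_comm]
  rfl

lemma frobSq_blk_le (A : Matrix (BlkIdx v s) (BlkIdx v s) ℝ) (i j : Fin (v + 1)) :
    frobSq (blk A i j) ≤ frobSq A := by
  rw [frobSq_blocks]
  calc frobSq (blk A i j) ≤ ∑ j', frobSq (blk A i j') :=
        Finset.single_le_sum (fun _ _ => frobSq_nonneg _) (Finset.mem_univ j)
  _ ≤ ∑ i', ∑ j', frobSq (blk A i' j') :=
        Finset.single_le_sum
          (fun _ _ => Finset.sum_nonneg fun _ _ => frobSq_nonneg _) (Finset.mem_univ i)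

lemma frobNorm_blk_le (A : Matrix (BlkIdx v s) (BlkIdx v s) ℝ) (i j : Fin (v + 1)) :
    frobNorm (blk A i j) ≤ frobNorm A :=
  Real.sqrt_le_sqrt (frobSq_blk_le A i j)

lemma diagPart_sub_dmat {ι' : Type*} (lam : ι' → Fin (v + 1) → ℝ) (τ : ι')
    (M : Matrix (BlkIdx v s) (BlkIdx v s) ℝ) :
    diagPart M - Dmat s lam τ = diagPart (M - Dmat s lam τ) := by
  ext q r
  by_cases h : q = r
  · subst h
    simp [diagPart, Dmat, Matrix.sub_apply, Matrix.diagonal_apply_eq]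
  · simp [diagPart, Dmat, Matrix.sub_apply, Matrix.diagonal_apply_ne _ h]

lemma diagPart_smul {n : Type*} [Fintype n] [DecidableEq n] (c : ℝ) (A : Matrix n n ℝ) :
    diagPart (c • A) = c • diagPart A := by
  ext q r
  by_cases h : q = r
  · subst h; simp [diagPart, Matrix.diagonal_apply_eq]
  · simp [diagPart, Matrix.diagonal_apply_ne _ h]

lemma frobNorm_diagPart_le (Y : Matrix (BlkIdx v s) (BlkIdx v s) ℝ) :
    frobNorm (diagPart Y) ≤ ∑ i, frobNorm (blk Y i i) := by
  have h1 : frobSq (diagPart Y) = ∑ q, (Y q q) ^ 2 := by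
    rw [frobSq]
    refine Finset.sum_congr rfl fun q _ => ?_
    rw [Finset.sum_eq_single q]
    · simp [diagPart, Matrix.diagonal_apply_eq]
    · intro r _ hr
      simp [diagPart, Matrix.diagonal_apply_ne' _ hr]
    · intro habs; exact absurd (Finset.mem_univ q) habs
  have h2 : frobSq (diagPart Y) ≤ ∑ i, frobSq (blk Y i i) := by
    rw [h1, sigma_sum (f := fun q => (Y q q) ^ 2)]
    refine Finset.sum_le_sum fun i _ => ?_
    rw [frobSq]
    refine Finset.sum_le_sum fun a _ => ?_
    calc (Y ⟨i, a⟩ ⟨i, a⟩) ^ 2 = (blk Y i i a a) ^ 2 := rfl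
    _ ≤ ∑ b, (blk Y i i a b) ^ 2 :=
        Finset.single_le_sum (f := fun b => (blk Y i i a b) ^ 2)
          (fun _ _ => sq_nonneg _) (Finset.mem_univ a)
  calc frobNorm (diagPart Y) ≤ Real.sqrt (∑ i, frobSq (blk Y i i)) := Real.sqrt_le_sqrt h2
  _ ≤ ∑ i, frobNorm (blk Y i i) :=
      sqrt_sum_le _ _ fun i _ => frobSq_nonneg _

end BlockLemmas
/- ======================= key algebraic identity ======================= -/

section KeyIdentity
variable {v : ℕ} {s : Fin (v + 1) → ℕ} {ι' : Type*}

lemma key_identity (lam : ι' → Fin (v + 1) → ℝ) (τ : ι')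
    (U M : Matrix (BlkIdx v s) (BlkIdx v s) ℝ) (hU : Uᵀ * U = 1) (i : Fin (v + 1)) :
    blk (Uᵀ * M * U) i i - lam τ i • (1 : Matrix (Fin (s i)) (Fin (s i)) ℝ)
      - (blk U i i)ᵀ * (blk M i i - lam τ i • (1 : Matrix (Fin (s i)) (Fin (s i)) ℝ)) * blk U i i
    = (∑ k, (lam τ k - lam τ i) • ((blk U k i)ᵀ * blk U k i))
      + ∑ k, ∑ l, (if k = i ∧ l = i then 0 else
          (blk U k i)ᵀ * blk (M - Dmat s lam τ) k l * blk U l i) := by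
  classical
  have hBO : ∑ k, (blk U k i)ᵀ * blk U k i = 1 := by
    have h := blk_mul Uᵀ U i i
    rw [hU, blk_one_same] at h
    calc ∑ k, (blk U k i)ᵀ * blk U k i = ∑ k, blk Uᵀ i k * blk U k i :=
          Finset.sum_congr rfl fun k _ => by rw [blk_transpose]
    _ = 1 := h.symm
  have h1 : blk (Uᵀ * M * U) i i = ∑ l, ∑ k, (blk U k i)ᵀ * blk M k l * blk U l i := by
    rw [blk_mul (Uᵀ * M) U i i]
    refine Finset.sum_congr rfl fun l _ => ?_
    rw [blk_mul Uᵀ M i l, Matrix.sum_mul]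
    exact Finset.sum_congr rfl fun k _ => by rw [blk_transpose]
  have h2 : ∀ k l, (blk U k i)ᵀ * blk M k l * blk U l i
      = (blk U k i)ᵀ * blk (Dmat s lam τ) k l * blk U l i
        + (blk U k i)ᵀ * blk (M - Dmat s lam τ) k l * blk U l i := by
    intro k l
    rw [blk_sub, Matrix.mul_sub, Matrix.sub_mul]
    abel
  have h3 : ∀ k, ∑ l, (blk U k i)ᵀ * blk (Dmat s lam τ) k l * blk U l i
      = lam τ k • ((blk U k i)ᵀ * blk U k i) := by
    intro k
    rw [Finset.sum_eq_single k]
    · rw [blk_dmat_same, Matrix.mul_smul, Matrix.mul_one, Matrix.smul_mul]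
    · intro l _ hl
      rw [blk_dmat_ne lam τ (Ne.symm hl), Matrix.mul_zero, Matrix.zero_mul]
    · intro habs; exact absurd (Finset.mem_univ k) habs
  have h4 : blk (Uᵀ * M * U) i i
      = (∑ k, lam τ k • ((blk U k i)ᵀ * blk U k i))
        + ∑ k, ∑ l, (blk U k i)ᵀ * blk (M - Dmat s lam τ) k l * blk U l i := by
    rw [h1, Finset.sum_comm]
    calc ∑ k, ∑ l, (blk U k i)ᵀ * blk M k l * blk U l i
        = ∑ k, ∑ l, ((blk U k i)ᵀ * blk (Dmat s lam τ) k l * blk U l i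
            + (blk U k i)ᵀ * blk (M - Dmat s lam τ) k l * blk U l i) :=
          Finset.sum_congr rfl fun k _ => Finset.sum_congr rfl fun l _ => h2 k l
    _ = _ := by
          simp_rw [Finset.sum_add_distrib]
          congr 1
          exact Finset.sum_congr rfl fun k _ => h3 k
  have h5 : lam τ i • (1 : Matrix (Fin (s i)) (Fin (s i)) ℝ)
      = ∑ k, lam τ i • ((blk U k i)ᵀ * blk U k i) := by
    rw [← Finset.smul_sum, hBO]
  have h6 : (blk U i i)ᵀ * (blk M i i - lam τ i • (1 : Matrix (Fin (s i)) (Fin (s i)) ℝ))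
        * blk U i i
      = (blk U i i)ᵀ * blk (M - Dmat s lam τ) i i * blk U i i := by
    rw [blk_sub, blk_dmat_same]
  have h7 : ∑ k, ∑ l, (if k = i ∧ l = i then (0 : Matrix (Fin (s i)) (Fin (s i)) ℝ) else
          (blk U k i)ᵀ * blk (M - Dmat s lam τ) k l * blk U l i)
      = (∑ k, ∑ l, (blk U k i)ᵀ * blk (M - Dmat s lam τ) k l * blk U l i)
        - (blk U i i)ᵀ * blk (M - Dmat s lam τ) i i * blk U i i := by
    have key : ∀ k l, (if k = i ∧ l = i then (0 : Matrix (Fin (s i)) (Fin (s i)) ℝ) else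
          (blk U k i)ᵀ * blk (M - Dmat s lam τ) k l * blk U l i)
        = (blk U k i)ᵀ * blk (M - Dmat s lam τ) k l * blk U l i
          - (if k = i then (if l = i then
              (blk U i i)ᵀ * blk (M - Dmat s lam τ) i i * blk U i i else 0) else 0) := by
      intro k l
      by_cases hk : k = i
      · by_cases hl : l = i
        · rw [hk, hl]; simp
        · simp [hk, hl]
      · simp [hk]
    simp_rw [key, Finset.sum_sub_distrib]
    congr 1
    simp
  have h8 : ∑ k, (lam τ k - lam τ i) • ((blk U k i)ᵀ * blk U k i)
      = (∑ k, lam τ k • ((blk U k i)ᵀ * blk U k i))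
        - ∑ k, lam τ i • ((blk U k i)ᵀ * blk U k i) := by
    rw [← Finset.sum_sub_distrib]
    exact Finset.sum_congr rfl fun k _ => sub_smul _ _ _
  rw [h4, h6, h7, h8, h5]
  abel

end KeyIdentity
theorem statement13 {Ω : Type*} [MeasurableSpace Ω] (μ : Measure Ω) [IsProbabilityMeasure μ]
    (v : ℕ) (hv : 1 ≤ v) (s : Fin (v + 1) → ℕ) (hs : ∀ j, 1 ≤ s j)
    {ι : Type*} [Fintype ι] [Nonempty ι]
    (lam : ι → Fin (v + 1) → ℝ) (hlam0 : ∀ τ, lam τ (Fin.last v) = 0)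
    (U : ℕ → Ω → Matrix (BlkIdx v s) (BlkIdx v s) ℝ)
    (hUmeas : ∀ T i j, Measurable fun ω => U T ω i j)
    (hUorth : ∀ T ω, (U T ω)ᵀ * U T ω = 1)
    (hUoff : ∀ i j, i ≠ j → MatIsOp μ fun T ω => Real.sqrt T • blk (U T ω) i j)
    (H : ι → ℕ → Ω → Matrix (BlkIdx v s) (BlkIdx v s) ℝ)
    (hHmeas : ∀ τ T i j, Measurable fun ω => H τ T ω i j)
    (hHsym : ∀ τ T ω, (H τ T ω)ᵀ = H τ T ω)
    (hHop : ∀ τ, MatIsOp μ fun T ω => Real.sqrt T • (H τ T ω - Dmat s lam τ)) :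
    (∀ τ, ∀ i : Fin (v + 1), MatIsOp μ fun T ω =>
        (T : ℝ) • (blk ((U T ω)ᵀ * H τ T ω * U T ω) i i
          - lam τ i • (1 : Matrix (Fin (s i)) (Fin (s i)) ℝ)
          - (blk (U T ω) i i)ᵀ * (blk (H τ T ω) i i
              - lam τ i • (1 : Matrix (Fin (s i)) (Fin (s i)) ℝ)) * blk (U T ω) i i)) ∧
      (∀ τ, MatTendstoP0 μ fun T ω =>
        diagPart ((U T ω)ᵀ * H τ T ω * U T ω) - Dmat s lam τ) := by
  classical
  have hcU0 : (0:ℝ) ≤ Real.sqrt (Fintype.card (BlkIdx v s)) := Real.sqrt_nonneg _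
  have hUn : ∀ (T : ℕ) (ω : Ω) (k l : Fin (v + 1)),
      frobNorm (blk (U T ω) k l) ≤ Real.sqrt (Fintype.card (BlkIdx v s)) := fun T ω k l =>
    (frobNorm_blk_le _ _ _).trans (frobNorm_orth (hUorth T ω)).le
  have hpart1 : ∀ τ, ∀ i : Fin (v + 1), MatIsOp μ fun T ω =>
      (T : ℝ) • (blk ((U T ω)ᵀ * H τ T ω * U T ω) i i
        - lam τ i • (1 : Matrix (Fin (s i)) (Fin (s i)) ℝ)
        - (blk (U T ω) i i)ᵀ * (blk (H τ T ω) i i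
            - lam τ i • (1 : Matrix (Fin (s i)) (Fin (s i)) ℝ)) * blk (U T ω) i i) := by
    intro τ i
    have huop : ∀ k : Fin (v + 1), ROp μ fun T ω =>
        (if k = i then 0 else frobNorm (Real.sqrt T • blk (U T ω) k i)) := by
      intro k
      by_cases hk : k = i
      · exact ROp.of_bounded 0 fun T ω => by rw [if_pos hk]
      · exact (rop_of_matIsOp (hUoff k i hk)).of_le fun T ω => by rw [if_neg hk]
    have hu0 : ∀ (k : Fin (v + 1)) (T : ℕ) (ω : Ω),
        0 ≤ (if k = i then 0 else frobNorm (Real.sqrt T • blk (U T ω) k i)) := by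
      intro k T ω
      split
      · exact le_rfl
      · exact frobNorm_nonneg _
    have heop : ROp μ fun T ω => frobNorm (Real.sqrt T • (H τ T ω - Dmat s lam τ)) :=
      rop_of_matIsOp (hHop τ)
    refine matIsOp_of_le (f := fun T ω =>
        (∑ k, |lam τ k - lam τ i| *
          ((if k = i then 0 else frobNorm (Real.sqrt T • blk (U T ω) k i)) *
           (if k = i then 0 else frobNorm (Real.sqrt T • blk (U T ω) k i))))
        + ∑ k, ∑ l, Real.sqrt (Fintype.card (BlkIdx v s))
            * frobNorm (Real.sqrt T • (H τ T ω - Dmat s lam τ))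
            * ((if k = i then 0 else frobNorm (Real.sqrt T • blk (U T ω) k i))
              + (if l = i then 0 else frobNorm (Real.sqrt T • blk (U T ω) l i)))) ?_ ?_
    · refine ROp.add ?_ ?_
      · refine ROp.sum _ _ fun k _ => ?_
        exact ROp.const_mul _ ((huop k).mul (huop k) (hu0 k)) fun T ω =>
          mul_nonneg (hu0 k T ω) (hu0 k T ω)
      · refine ROp.sum _ _ fun k _ => ?_
        refine ROp.sum _ _ fun l _ => ?_
        have base : ROp μ fun T ω => Real.sqrt (Fintype.card (BlkIdx v s)) *
            (frobNorm (Real.sqrt T • (H τ T ω - Dmat s lam τ))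
              * ((if k = i then 0 else frobNorm (Real.sqrt T • blk (U T ω) k i))
                + (if l = i then 0 else frobNorm (Real.sqrt T • blk (U T ω) l i)))) :=
          ROp.const_mul _ (heop.mul ((huop k).add (huop l))
              fun T ω => add_nonneg (hu0 k T ω) (hu0 l T ω))
            fun T ω => mul_nonneg (frobNorm_nonneg _)
              (add_nonneg (hu0 k T ω) (hu0 l T ω))
        exact base.of_le fun T ω => le_of_eq (by ring)
    · intro T ω
      have hT0 : (0:ℝ) ≤ (T:ℕ) := Nat.cast_nonneg T
      have hsT : Real.sqrt T * Real.sqrt T = (T:ℝ) := Real.mul_self_sqrt hT0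
      have hsT0 : (0:ℝ) ≤ Real.sqrt T := Real.sqrt_nonneg _
      rw [key_identity lam τ (U T ω) (H τ T ω) (hUorth T ω) i, smul_add]
      simp only [Finset.smul_sum]
      refine (frobNorm_add_le _ _).trans (add_le_add ?_ ?_)
      · refine (frobNorm_sum_le _ _).trans (Finset.sum_le_sum fun k _ => ?_)
        by_cases hk : k = i
        · rw [hk]
          simp [sub_self, frobNorm_zero]
        · rw [if_neg hk]
          have hVs : frobNorm (Real.sqrt T • blk (U T ω) k i)
              = Real.sqrt T * frobNorm (blk (U T ω) k i) := by
            rw [frobNorm_smul, abs_of_nonneg hsT0]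
          have hLHS : frobNorm ((T:ℝ) • ((lam τ k - lam τ i) •
                ((blk (U T ω) k i)ᵀ * blk (U T ω) k i)))
              = (T:ℝ) * (|lam τ k - lam τ i|
                  * frobNorm ((blk (U T ω) k i)ᵀ * blk (U T ω) k i)) := by
            rw [frobNorm_smul, frobNorm_smul, Nat.abs_cast]
          have hm : frobNorm ((blk (U T ω) k i)ᵀ * blk (U T ω) k i)
              ≤ frobNorm (blk (U T ω) k i) * frobNorm (blk (U T ω) k i) := by
            have h := frobNorm_mul_le (blk (U T ω) k i)ᵀ (blk (U T ω) k i)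
            rwa [frobNorm_transpose] at h
          rw [hLHS, hVs]
          calc (T:ℝ) * (|lam τ k - lam τ i|
                * frobNorm ((blk (U T ω) k i)ᵀ * blk (U T ω) k i))
              ≤ (T:ℝ) * (|lam τ k - lam τ i|
                * (frobNorm (blk (U T ω) k i) * frobNorm (blk (U T ω) k i))) :=
              mul_le_mul_of_nonneg_left
                (mul_le_mul_of_nonneg_left hm (abs_nonneg _)) hT0
          _ = |lam τ k - lam τ i| * (Real.sqrt T * frobNorm (blk (U T ω) k i)
                * (Real.sqrt T * frobNorm (blk (U T ω) k i))) := by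
              linear_combination (-(|lam τ k - lam τ i| * frobNorm (blk (U T ω) k i)
                * frobNorm (blk (U T ω) k i))) * hsT
      · refine (frobNorm_sum_le _ _).trans (Finset.sum_le_sum fun k _ => ?_)
        refine (frobNorm_sum_le _ _).trans (Finset.sum_le_sum fun l _ => ?_)
        by_cases hkl : k = i ∧ l = i
        · rw [if_pos hkl, smul_zero, frobNorm_zero]
          exact mul_nonneg (mul_nonneg hcU0 (frobNorm_nonneg _))
            (add_nonneg (hu0 k T ω) (hu0 l T ω))
        · rw [if_neg hkl]
          have hE : frobNorm (blk (H τ T ω - Dmat s lam τ) k l)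
              ≤ frobNorm (H τ T ω - Dmat s lam τ) := frobNorm_blk_le _ _ _
          have heq : frobNorm (Real.sqrt T • (H τ T ω - Dmat s lam τ))
              = Real.sqrt T * frobNorm (H τ T ω - Dmat s lam τ) := by
            rw [frobNorm_smul, abs_of_nonneg hsT0]
          have hLHS : frobNorm ((T:ℝ) • ((blk (U T ω) k i)ᵀ
                * blk (H τ T ω - Dmat s lam τ) k l * blk (U T ω) l i))
              = (T:ℝ) * frobNorm ((blk (U T ω) k i)ᵀ
                * blk (H τ T ω - Dmat s lam τ) k l * blk (U T ω) l i) := by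
            rw [frobNorm_smul, Nat.abs_cast]
          have h3 : frobNorm ((blk (U T ω) k i)ᵀ
                * blk (H τ T ω - Dmat s lam τ) k l * blk (U T ω) l i)
              ≤ frobNorm (blk (U T ω) k i) * frobNorm (blk (H τ T ω - Dmat s lam τ) k l)
                * frobNorm (blk (U T ω) l i) := by
            have h := frob_mul3_le (blk (U T ω) k i)ᵀ (blk (H τ T ω - Dmat s lam τ) k l)
              (blk (U T ω) l i)
            rwa [frobNorm_transpose] at h
          rw [hLHS, heq]
          have hVk0 := frobNorm_nonneg (blk (U T ω) k i)
          have hVl0 := frobNorm_nonneg (blk (U T ω) l i)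
          have hE0 := frobNorm_nonneg (blk (H τ T ω - Dmat s lam τ) k l)
          have hEE0 := frobNorm_nonneg (H τ T ω - Dmat s lam τ)
          by_cases hk : k = i
          · have hl : l ≠ i := fun h => hkl ⟨hk, h⟩
            rw [if_pos hk, if_neg hl]
            have hVl : frobNorm (Real.sqrt T • blk (U T ω) l i)
                = Real.sqrt T * frobNorm (blk (U T ω) l i) := by
              rw [frobNorm_smul, abs_of_nonneg hsT0]
            rw [hVl]
            calc (T:ℝ) * frobNorm ((blk (U T ω) k i)ᵀ
                  * blk (H τ T ω - Dmat s lam τ) k l * blk (U T ω) l i)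
                ≤ (T:ℝ) * (frobNorm (blk (U T ω) k i)
                    * frobNorm (blk (H τ T ω - Dmat s lam τ) k l)
                    * frobNorm (blk (U T ω) l i)) := mul_le_mul_of_nonneg_left h3 hT0
            _ = frobNorm (blk (U T ω) k i)
                  * (Real.sqrt T * frobNorm (blk (H τ T ω - Dmat s lam τ) k l))
                  * (Real.sqrt T * frobNorm (blk (U T ω) l i)) := by
                linear_combination (-(frobNorm (blk (U T ω) k i)
                  * frobNorm (blk (H τ T ω - Dmat s lam τ) k l)
                  * frobNorm (blk (U T ω) l i))) * hsT
            _ ≤ Real.sqrt (Fintype.card (BlkIdx v s))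
                  * (Real.sqrt T * frobNorm (H τ T ω - Dmat s lam τ))
                  * (Real.sqrt T * frobNorm (blk (U T ω) l i)) :=
                mul3_le (hUn T ω k i) (mul_le_mul_of_nonneg_left hE hsT0) le_rfl
                  hVk0 (mul_nonneg hsT0 hE0) (mul_nonneg hsT0 hVl0) hcU0
                  (mul_nonneg hsT0 hEE0)
            _ = Real.sqrt (Fintype.card (BlkIdx v s))
                  * (Real.sqrt T * frobNorm (H τ T ω - Dmat s lam τ))
                  * (0 + Real.sqrt T * frobNorm (blk (U T ω) l i)) := by ring
          · rw [if_neg hk]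
            have hVk : frobNorm (Real.sqrt T • blk (U T ω) k i)
                = Real.sqrt T * frobNorm (blk (U T ω) k i) := by
              rw [frobNorm_smul, abs_of_nonneg hsT0]
            rw [hVk]
            have hul0 : 0 ≤ (if l = i then 0
                else frobNorm (Real.sqrt T • blk (U T ω) l i)) := hu0 l T ω
            calc (T:ℝ) * frobNorm ((blk (U T ω) k i)ᵀ
                  * blk (H τ T ω - Dmat s lam τ) k l * blk (U T ω) l i)
                ≤ (T:ℝ) * (frobNorm (blk (U T ω) k i)
                    * frobNorm (blk (H τ T ω - Dmat s lam τ) k l)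
                    * frobNorm (blk (U T ω) l i)) := mul_le_mul_of_nonneg_left h3 hT0
            _ = (Real.sqrt T * frobNorm (blk (U T ω) k i))
                  * (Real.sqrt T * frobNorm (blk (H τ T ω - Dmat s lam τ) k l))
                  * frobNorm (blk (U T ω) l i) := by
                linear_combination (-(frobNorm (blk (U T ω) k i)
                  * frobNorm (blk (H τ T ω - Dmat s lam τ) k l)
                  * frobNorm (blk (U T ω) l i))) * hsT
            _ ≤ (Real.sqrt T * frobNorm (blk (U T ω) k i))
                  * (Real.sqrt T * frobNorm (H τ T ω - Dmat s lam τ))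
                  * Real.sqrt (Fintype.card (BlkIdx v s)) :=
                mul3_le le_rfl (mul_le_mul_of_nonneg_left hE hsT0) (hUn T ω l i)
                  (mul_nonneg hsT0 hVk0) (mul_nonneg hsT0 hE0) hVl0
                  (mul_nonneg hsT0 hVk0) (mul_nonneg hsT0 hEE0)
            _ ≤ Real.sqrt (Fintype.card (BlkIdx v s))
                  * (Real.sqrt T * frobNorm (H τ T ω - Dmat s lam τ))
                  * (Real.sqrt T * frobNorm (blk (U T ω) k i)
                    + (if l = i then 0
                        else frobNorm (Real.sqrt T • blk (U T ω) l i))) := by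
                nlinarith [mul_nonneg (mul_nonneg hcU0
                    (mul_nonneg hsT0 hEE0)) hul0]
  have hpart2 : ∀ τ, MatTendstoP0 μ fun T ω =>
      diagPart ((U T ω)ᵀ * H τ T ω * U T ω) - Dmat s lam τ := by
    intro τ
    apply tendstoP0_of_sqrt_op
    refine matIsOp_of_le (f := fun T ω => ∑ i : Fin (v + 1),
        (frobNorm ((T:ℝ) • (blk ((U T ω)ᵀ * H τ T ω * U T ω) i i
            - lam τ i • (1 : Matrix (Fin (s i)) (Fin (s i)) ℝ)
            - (blk (U T ω) i i)ᵀ * (blk (H τ T ω) i i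
                - lam τ i • (1 : Matrix (Fin (s i)) (Fin (s i)) ℝ)) * blk (U T ω) i i))
          + Real.sqrt (Fintype.card (BlkIdx v s))
            * frobNorm (Real.sqrt T • (H τ T ω - Dmat s lam τ))
            * Real.sqrt (Fintype.card (BlkIdx v s)))) ?_ ?_
    · refine ROp.sum _ _ fun i _ => ROp.add (rop_of_matIsOp (hpart1 τ i)) ?_
      have base := ROp.const_mul
        (Real.sqrt (Fintype.card (BlkIdx v s)) * Real.sqrt (Fintype.card (BlkIdx v s)))
        (rop_of_matIsOp (hHop τ)) (fun T ω => frobNorm_nonneg _)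
      exact base.of_le fun T ω => le_of_eq (by ring)
    · intro T ω
      have hsT0 : (0:ℝ) ≤ Real.sqrt T := Real.sqrt_nonneg _
      have hT1 : Real.sqrt T ≤ (T:ℝ) := by
        rcases Nat.eq_zero_or_pos T with h | h
        · subst h; simp
        · have h1 : (1:ℝ) ≤ (T:ℕ) := by exact_mod_cast h
          calc Real.sqrt T ≤ Real.sqrt ((T:ℝ)^2) := Real.sqrt_le_sqrt (by nlinarith)
          _ = (T:ℝ) := Real.sqrt_sq (by linarith)
      rw [diagPart_sub_dmat, ← diagPart_smul]
      refine (frobNorm_diagPart_le _).trans (Finset.sum_le_sum fun i _ => ?_)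
      have hblk : blk (Real.sqrt T • ((U T ω)ᵀ * H τ T ω * U T ω - Dmat s lam τ)) i i
          = Real.sqrt T • (blk ((U T ω)ᵀ * H τ T ω * U T ω) i i
              - lam τ i • (1 : Matrix (Fin (s i)) (Fin (s i)) ℝ)
              - (blk (U T ω) i i)ᵀ * (blk (H τ T ω) i i
                  - lam τ i • (1 : Matrix (Fin (s i)) (Fin (s i)) ℝ)) * blk (U T ω) i i)
            + (blk (U T ω) i i)ᵀ * (Real.sqrt T • (blk (H τ T ω) i i
                - lam τ i • (1 : Matrix (Fin (s i)) (Fin (s i)) ℝ))) * blk (U T ω) i i := by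
        rw [blk_smul, blk_sub, blk_dmat_same, Matrix.mul_smul, Matrix.smul_mul, ← smul_add]
        congr 1
        abel
      rw [hblk]
      refine (frobNorm_add_le _ _).trans (add_le_add ?_ ?_)
      · rw [frobNorm_smul, frobNorm_smul, Nat.abs_cast, abs_of_nonneg hsT0]
        exact mul_le_mul_of_nonneg_right hT1 (frobNorm_nonneg _)
      · have hE2 : frobNorm (Real.sqrt T • (blk (H τ T ω) i i
              - lam τ i • (1 : Matrix (Fin (s i)) (Fin (s i)) ℝ)))
            ≤ frobNorm (Real.sqrt T • (H τ T ω - Dmat s lam τ)) := by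
          have e1 : Real.sqrt T • (blk (H τ T ω) i i
                - lam τ i • (1 : Matrix (Fin (s i)) (Fin (s i)) ℝ))
              = blk (Real.sqrt T • (H τ T ω - Dmat s lam τ)) i i := by
            rw [blk_smul, blk_sub, blk_dmat_same]
          rw [e1]
          exact frobNorm_blk_le _ _ _
        refine (frob_mul3_le _ _ _).trans ?_
        rw [frobNorm_transpose]
        exact mul3_le (hUn T ω i i) hE2 (hUn T ω i i) (frobNorm_nonneg _)
          (frobNorm_nonneg _) (frobNorm_nonneg _) hcU0 (frobNorm_nonneg _)
  exact ⟨hpart1, hpart2⟩
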